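/- Let F be a field of characteristic zero and fix a monomial ordering ≺ on the monomials in d variables. Let θ_1,...,θ_m ∈ F^d be pairwise distinct points, and for each i let P_{i1},...,P_{is_i} ∈ F[x_1,...,x_d] be linearly independent polynomials; consider the interpolation conditions Δ consisting of the functionals g ↦ (P_{ij}(D)g)(θ_i), i = 1,...,m, j = 1,...,s_i (n = s_1 + ... + s_m conditions in total). Suppose {q_{ij} : i = 1,...,m, j = 1,...,s_i} ⊂ F[[x_1,...,x_d]] is a "reverse" reduced basis of the power series {e^{θ_i·X}·P_{ij} : i = 1,...,m, j = 1,...,s_i} (i.e., the q_{ij} are linearly independent, each q_{ij} lies in the span of the e^{θ_k·X}·P_{kl}, they span the same subspace, and under a fixed linear enumeration the ≺-least monomial of each earlier element does not occur in any later element). Then {lm(q_{ij}) : i = 1,...,m, j = 1,...,s_i} is the ≺-minimal monomial interpolating basis for Δ. -/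

import Mathlib

open MvPolynomial

/-- The iterated partial derivative operator `D^α = ∂^{α_1}_{x_1} ⋯ ∂^{α_d}_{x_d}`. -/
noncomputable def Dmon (F : Type*) [CommSemiring F] {d : ℕ} (α : Fin d →₀ ℕ) :
    Module.End F (MvPolynomial (Fin d) F) :=
  ((List.finRange d).map fun i =>
    ((pderiv i : Derivation F (MvPolynomial (Fin d) F) (MvPolynomial (Fin d) F)) :
      MvPolynomial (Fin d) F →ₗ[F] MvPolynomial (Fin d) F) ^ (α i)).prod

/-- The differential operator `P(D) = Σ_α P̂(α) D^α` induced by a polynomial `P`. -/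
noncomputable def PD {F : Type*} [Field F] {d : ℕ} (P : MvPolynomial (Fin d) F) :
    Module.End F (MvPolynomial (Fin d) F) :=
  ∑ α ∈ P.support, P.coeff α • Dmon F α

/-- The linear functional `δ₀ ∘ P(D) : g ↦ (P(D) g)(0)`. -/
noncomputable def delta0PD {F : Type*} [Field F] {d : ℕ} (P : MvPolynomial (Fin d) F) :
    MvPolynomial (Fin d) F →ₗ[F] F :=
  (MvPolynomial.aeval (0 : Fin d → F)).toLinearMap ∘ₗ PD P

/-- `prec` is a monomial ordering: a linear well-ordering of the monomials (identified with
their exponent vectors) that is compatible with multiplication of monomials. -/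
structure IsMonomialOrder {d : ℕ} (prec : (Fin d →₀ ℕ) → (Fin d →₀ ℕ) → Prop) : Prop where
  irrefl : ∀ a, ¬ prec a a
  trans : ∀ a b c, prec a b → prec b c → prec a c
  total : ∀ a b, a ≠ b → prec a b ∨ prec b a
  wf : WellFounded prec
  add_compat : ∀ a b c, prec a b → prec (a + c) (b + c)

/-- `m` is the `prec`-least monomial occurring in `P` with nonzero coefficient,
i.e. `X^m = lm(P)`. -/
def IsLeastMon {F : Type*} [Field F] {d : ℕ} (prec : (Fin d →₀ ℕ) → (Fin d →₀ ℕ) → Prop)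
    (P : MvPolynomial (Fin d) F) (m : Fin d →₀ ℕ) : Prop :=
  m ∈ P.support ∧ ∀ m' ∈ P.support, m' ≠ m → prec m m'

/-- `{P_1, ..., P_n}` is a "reverse" reduced basis w.r.t. `prec`: the `P_i` are linearly
independent and `lm(P_i) ∉ Λ{P_j}` for all `i < j`. -/
def IsRevReducedBasis {F : Type*} [Field F] {d n : ℕ}
    (prec : (Fin d →₀ ℕ) → (Fin d →₀ ℕ) → Prop) (P : Fin n → MvPolynomial (Fin d) F) : Prop :=
  LinearIndependent F P ∧
    ∀ i j : Fin n, i < j → ∀ m, IsLeastMon prec (P i) m → m ∉ (P j).support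

/-- The finset of exponent vectors `T` is a monomial interpolating basis for the `n`
interpolation conditions `lam`: `T` has `n` (distinct) elements and for every vector of
values `f` there is a unique `g` in the span of the monomials `X^m`, `m ∈ T`, with
`lam i g = f i` for all `i`. -/
def IsMonIntBasisSet {F : Type*} [Field F] {d n : ℕ}
    (lam : Fin n → (MvPolynomial (Fin d) F →ₗ[F] F)) (T : Finset (Fin d →₀ ℕ)) : Prop :=
  T.card = n ∧ ∀ f : Fin n → F, ∃! g : MvPolynomial (Fin d) F,
    g ∈ Submodule.span F ((fun m => (monomial m (1 : F) : MvPolynomial (Fin d) F)) ''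
        (T : Set (Fin d →₀ ℕ))) ∧ ∀ i, lam i g = f i

/-- `m` is the `prec`-greatest element of the finset `S`. -/
def IsMaxOf {d : ℕ} (prec : (Fin d →₀ ℕ) → (Fin d →₀ ℕ) → Prop)
    (S : Finset (Fin d →₀ ℕ)) (m : Fin d →₀ ℕ) : Prop :=
  m ∈ S ∧ ∀ m' ∈ S, m' ≠ m → prec m' m

/-- `T' ≺ T` for two finsets of monomials with `T − T' ≠ ∅` and `T' − T ≠ ∅`:
`max_≺ (T' − T) ≺ max_≺ (T − T')`. -/
def SetPrec {d : ℕ} (prec : (Fin d →₀ ℕ) → (Fin d →₀ ℕ) → Prop)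
    (T' T : Finset (Fin d →₀ ℕ)) : Prop :=
  ∃ a b, IsMaxOf prec (T' \ T) a ∧ IsMaxOf prec (T \ T') b ∧ prec a b

/-- The formal power series `e^{θ·X} = Σ_{j=0}^∞ (θ·X)^j/j! = Σ_α (θ^α/α!) X^α`. -/
noncomputable def expThetaX {F : Type*} [Field F] {d : ℕ} (θ : Fin d → F) :
    MvPowerSeries (Fin d) F :=
  fun α : Fin d →₀ ℕ =>
    (∏ i : Fin d, θ i ^ α i) / ((∏ i : Fin d, ((α i).factorial) : ℕ) : F)

/-- `m` is the `prec`-least monomial occurring with nonzero coefficient in the formal power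
series `q`, i.e. `X^m = lm(q)`. -/
def IsLeastMonPS {F : Type*} [Field F] {d : ℕ}
    (prec : (Fin d →₀ ℕ) → (Fin d →₀ ℕ) → Prop)
    (q : MvPowerSeries (Fin d) F) (m : Fin d →₀ ℕ) : Prop :=
  MvPowerSeries.coeff m q ≠ 0 ∧
    ∀ m', MvPowerSeries.coeff m' q ≠ 0 → m' ≠ m → prec m m'

section Helpers

variable {F : Type*} [Field F] {d : ℕ}

/-- factorial of a multi-index, as an element of F -/
noncomputable def mfact (δ : Fin d →₀ ℕ) : F := ((∏ i : Fin d, ((δ i).factorial) : ℕ) : F)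

/-- The apolar pairing `B f g = Σ_δ δ! f_δ g_δ`. -/
noncomputable def Bfun (f : MvPowerSeries (Fin d) F) (g : MvPolynomial (Fin d) F) : F :=
  ∑ δ ∈ g.support, mfact δ * MvPowerSeries.coeff δ f * g.coeff δ

lemma Bfun_eq_sum_subset (f : MvPowerSeries (Fin d) F) (g : MvPolynomial (Fin d) F)
    {s : Finset (Fin d →₀ ℕ)} (hs : g.support ⊆ s) :
    Bfun f g = ∑ δ ∈ s, mfact δ * MvPowerSeries.coeff δ f * g.coeff δ :=
  Finset.sum_subset hs (fun x _ hx => by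
    rw [MvPolynomial.notMem_support_iff.mp hx, mul_zero])

/-- `Bfun f` as a linear functional on polynomials. -/
noncomputable def BfunL (f : MvPowerSeries (Fin d) F) : MvPolynomial (Fin d) F →ₗ[F] F where
  toFun := Bfun f
  map_add' g h := by
    classical
    rw [Bfun_eq_sum_subset f (g + h) MvPolynomial.support_add,
      Bfun_eq_sum_subset f g (Finset.subset_union_left (s₂ := h.support)),
      Bfun_eq_sum_subset f h (Finset.subset_union_right (s₁ := g.support)),
      ← Finset.sum_add_distrib]
    refine Finset.sum_congr rfl fun δ _ => ?_
    rw [MvPolynomial.coeff_add, mul_add]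
  map_smul' r g := by
    show Bfun f (r • g) = r • Bfun f g
    have hsupp : (r • g).support ⊆ g.support := by
      intro x hx
      rw [MvPolynomial.mem_support_iff] at hx ⊢
      intro h0
      exact hx (by rw [MvPolynomial.coeff_smul, h0, smul_zero])
    rw [smul_eq_mul, Bfun_eq_sum_subset f (r • g) hsupp, Bfun, Finset.mul_sum]
    refine Finset.sum_congr rfl fun δ _ => ?_
    rw [MvPolynomial.coeff_smul, smul_eq_mul]
    ring

@[simp] lemma BfunL_apply (f : MvPowerSeries (Fin d) F) (g : MvPolynomial (Fin d) F) :
    BfunL f g = Bfun f g := rfl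

lemma mfact_ne_zero [CharZero F] (δ : Fin d →₀ ℕ) : (mfact δ : F) ≠ 0 := by
  unfold mfact
  rw [Nat.cast_ne_zero]
  exact Finset.prod_ne_zero_iff.mpr fun i _ => (Nat.factorial_pos _).ne'

lemma Bfun_monomial (f : MvPowerSeries (Fin d) F) (δ : Fin d →₀ ℕ) (c : F) :
    Bfun f (monomial δ c) = mfact δ * MvPowerSeries.coeff δ f * c := by
  classical
  by_cases hc : c = 0
  · simp [hc, Bfun]
  · rw [Bfun, MvPolynomial.support_monomial, if_neg hc, Finset.sum_singleton,
      MvPolynomial.coeff_monomial, if_pos rfl]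

lemma Bfun_add_left (f f' : MvPowerSeries (Fin d) F) (g : MvPolynomial (Fin d) F) :
    Bfun (f + f') g = Bfun f g + Bfun f' g := by
  unfold Bfun
  rw [← Finset.sum_add_distrib]
  refine Finset.sum_congr rfl fun δ _ => ?_
  rw [map_add]; ring

lemma Bfun_smul_left (r : F) (f : MvPowerSeries (Fin d) F) (g : MvPolynomial (Fin d) F) :
    Bfun (r • f) g = r * Bfun f g := by
  unfold Bfun
  rw [Finset.mul_sum]
  refine Finset.sum_congr rfl fun δ _ => ?_
  rw [map_smul, smul_eq_mul]; ring

lemma Bfun_sum_left {ι : Type*} (s : Finset ι) (h : ι → MvPowerSeries (Fin d) F)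
    (g : MvPolynomial (Fin d) F) :
    Bfun (∑ i ∈ s, h i) g = ∑ i ∈ s, Bfun (h i) g := by
  classical
  induction s using Finset.induction_on with
  | empty => simp [Bfun]
  | insert _ _ hx ih =>
    rw [Finset.sum_insert hx, Finset.sum_insert hx, Bfun_add_left, ih]


/-- abbreviation for pderiv as a linear map -/
noncomputable def pdL (i : Fin d) : MvPolynomial (Fin d) F →ₗ[F] MvPolynomial (Fin d) F :=
  ((pderiv i : Derivation F (MvPolynomial (Fin d) F) (MvPolynomial (Fin d) F)) :
      MvPolynomial (Fin d) F →ₗ[F] MvPolynomial (Fin d) F)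

lemma pdL_apply (i : Fin d) (p : MvPolynomial (Fin d) F) : pdL i p = pderiv i p := rfl

lemma pdL_pow_monomial (i : Fin d) (k : ℕ) (γ : Fin d →₀ ℕ) (c : F) :
    ((pdL i) ^ k) (monomial γ c) =
      monomial (γ - Finsupp.single i k) (c * ((γ i).descFactorial k : ℕ)) := by
  induction k with
  | zero => simp
  | succ k ih =>
    rw [pow_succ', Module.End.mul_apply, ih, pdL_apply, pderiv_monomial]
    have h1 : (γ - Finsupp.single i k) i = γ i - k := by
      rw [Finsupp.tsub_apply, Finsupp.single_eq_same]
    have h2 : γ - Finsupp.single i k - Finsupp.single i 1 = γ - Finsupp.single i (k + 1) := by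
      rw [tsub_tsub, ← Finsupp.single_add]
    rw [h1, h2]
    congr 1
    rw [Nat.descFactorial_succ]
    push_cast
    ring

lemma listsingle_apply_eq_zero (α : Fin d →₀ ℕ) (i : Fin d) :
    ∀ l : List (Fin d), i ∉ l → ((l.map fun j => Finsupp.single j (α j)).sum) i = 0 := by
  intro l
  induction l with
  | nil => simp
  | cons j l ih =>
    intro hi
    rw [List.map_cons, List.sum_cons, Finsupp.add_apply,
      Finsupp.single_eq_of_ne' (by rintro rfl; exact hi List.mem_cons_self),
      ih (fun h => hi (List.mem_cons_of_mem _ h)), add_zero]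

lemma Dlist_monomial (α : Fin d →₀ ℕ) (γ : Fin d →₀ ℕ) (c : F) :
    ∀ l : List (Fin d), l.Nodup →
    ((l.map fun i => (pdL i) ^ (α i)).prod) (monomial γ c)
      = monomial (γ - (l.map fun i => Finsupp.single i (α i)).sum)
          (c * ((l.map fun i => (γ i).descFactorial (α i)).prod : ℕ)) := by
  intro l
  induction l with
  | nil => simp
  | cons i l ih =>
    intro hnd
    rw [List.nodup_cons] at hnd
    rw [List.map_cons, List.prod_cons, Module.End.mul_apply, ih hnd.2, pdL_pow_monomial]
    have hS : (γ - (l.map fun j => Finsupp.single j (α j)).sum) i = γ i :=by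
      rw [Finsupp.tsub_apply, listsingle_apply_eq_zero α i l hnd.1, Nat.sub_zero]
    rw [hS]
    congr 1
    · rw [tsub_tsub, List.map_cons, List.sum_cons, add_comm]
    · rw [List.map_cons, List.prod_cons]
      push_cast
      ring

lemma Dmon_monomial (α γ : Fin d →₀ ℕ) (c : F) :
    Dmon F α (monomial γ c) =
      monomial (γ - α) (c * ((∏ i : Fin d, (γ i).descFactorial (α i) : ℕ) : F)) := by
  have : Dmon F α = ((List.finRange d).map fun i => (pdL i) ^ (α i)).prod := rfl
  rw [this, Dlist_monomial α γ c _ (List.nodup_finRange d), ← Fin.sum_univ_def,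
    ← Fin.prod_univ_def, Finsupp.univ_sum_single]

lemma aeval_monomial' (θ0 : Fin d → F) (δ : Fin d →₀ ℕ) (a : F) :
    aeval θ0 (monomial δ a) = a * ∏ i : Fin d, θ0 i ^ δ i := by
  rw [MvPolynomial.aeval_monomial, Finsupp.prod_pow]
  norm_num [Algebra.algebraMap_self_apply]

lemma mfact_sub (α γ : Fin d →₀ ℕ) (h : α ≤ γ) :
    (mfact (γ - α) : F) * ((∏ i : Fin d, (γ i).descFactorial (α i) : ℕ) : F) = mfact γ := by
  unfold mfact
  rw [← Nat.cast_mul, ← Finset.prod_mul_distrib]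
  congr 1
  refine Finset.prod_congr rfl fun i _ => ?_
  rw [Finsupp.tsub_apply]
  exact Nat.factorial_mul_descFactorial (Finsupp.le_def.mp h i)

lemma keyA [CharZero F] (θ0 : Fin d → F) (P g : MvPolynomial (Fin d) F) :
    aeval θ0 (PD P g) = Bfun (expThetaX θ0 * (P : MvPowerSeries (Fin d) F)) g := by
  induction g using MvPolynomial.induction_on' with
  | add p q hp hq =>
    rw [map_add (PD P), map_add, hp, hq, ← BfunL_apply, ← BfunL_apply (g := q),
      ← BfunL_apply (g := p + q), map_add]
  | monomial γ c =>
    classical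
    have hPD : PD P (monomial γ c)
        = ∑ α ∈ P.support, (P.coeff α • Dmon F α) (monomial γ c) := by
      rw [PD, LinearMap.sum_apply]
    rw [hPD, map_sum, Bfun_monomial]
    have hcoeff : MvPowerSeries.coeff γ (expThetaX θ0 * (P : MvPowerSeries (Fin d) F))
        = ∑ p ∈ Finset.HasAntidiagonal.antidiagonal γ, expThetaX θ0 p.1 * P.coeff p.2 := by
      rw [MvPowerSeries.coeff_mul]
      refine Finset.sum_congr rfl fun p _ => ?_
      rw [MvPolynomial.coeff_coe, MvPowerSeries.coeff_apply]
    rw [hcoeff, Finset.mul_sum, Finset.sum_mul]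
    have step1 : ∀ α ∈ P.support, α ∉ P.support.filter (fun α => α ≤ γ) →
        aeval θ0 ((P.coeff α • Dmon F α) (monomial γ c)) = 0 := by
      intro α hα hα'
      have hnle : ¬ α ≤ γ := by
        intro hle
        exact hα' (Finset.mem_filter.mpr ⟨hα, hle⟩)
      obtain ⟨i, hi⟩ : ∃ i, γ i < α i := by
        by_contra hcon
        push_neg at hcon
        exact hnle (Finsupp.le_def.mpr fun i => hcon i)
      have hdesc : (∏ i : Fin d, (γ i).descFactorial (α i)) = 0 :=
        Finset.prod_eq_zero (Finset.mem_univ i) (Nat.descFactorial_eq_zero_iff_lt.mpr hi)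
      rw [LinearMap.smul_apply, Dmon_monomial, hdesc]
      simp
    rw [← Finset.sum_subset (Finset.filter_subset (fun α => α ≤ γ) P.support) step1]
    have step2 : ∀ p ∈ Finset.HasAntidiagonal.antidiagonal γ,
        p ∉ (Finset.HasAntidiagonal.antidiagonal γ).filter (fun p => p.2 ∈ P.support) →
        mfact γ * (expThetaX θ0 p.1 * P.coeff p.2) * c = 0 := by
      intro p hp hp'
      have : P.coeff p.2 = 0 := by
        by_contra hcon
        exact hp' (Finset.mem_filter.mpr ⟨hp, MvPolynomial.mem_support_iff.mpr hcon⟩)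
      rw [this]
      ring
    rw [← Finset.sum_subset (Finset.filter_subset _ _) step2]
    refine Finset.sum_nbij' (fun α => (γ - α, α)) (fun p => p.2) ?_ ?_ ?_ ?_ ?_
    · intro α hα
      rw [Finset.mem_filter] at hα ⊢
      exact ⟨Finset.HasAntidiagonal.mem_antidiagonal.mpr (tsub_add_cancel_of_le hα.2), hα.1⟩
    · intro p hp
      rw [Finset.mem_filter] at hp ⊢
      refine ⟨hp.2, ?_⟩
      rw [← Finset.HasAntidiagonal.mem_antidiagonal.mp hp.1]
      exact le_add_self
    · intro α _
      rfl
    · intro p hp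
      rw [Finset.mem_filter] at hp
      have := Finset.HasAntidiagonal.mem_antidiagonal.mp hp.1
      refine Prod.ext ?_ rfl
      exact (eq_tsub_of_add_eq this).symm
    · intro α hα
      rw [Finset.mem_filter] at hα
      rw [LinearMap.smul_apply, Dmon_monomial, map_smul, aeval_monomial', smul_eq_mul]
      have hE : expThetaX θ0 (γ - α)
          = (∏ i : Fin d, θ0 i ^ ((γ - α) i)) / (mfact (γ - α) : F) := rfl
      rw [hE]
      have hm := mfact_sub (F := F) α γ hα.2
      have hne : (mfact (γ - α) : F) ≠ 0 := mfact_ne_zero _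
      rw [← hm]
      field_simp

/-- `Bfun · g` as a linear functional on power series. -/
noncomputable def BL (g : MvPolynomial (Fin d) F) : MvPowerSeries (Fin d) F →ₗ[F] F where
  toFun h := Bfun h g
  map_add' a b := Bfun_add_left a b g
  map_smul' r a := by
    show Bfun (r • a) g = (RingHom.id F) r • Bfun a g
    rw [RingHom.id_apply, smul_eq_mul, Bfun_smul_left]

@[simp] lemma BL_apply (g : MvPolynomial (Fin d) F) (h : MvPowerSeries (Fin d) F) :
    BL g h = Bfun h g := rfl

lemma Bfun_sum_monomial (f : MvPowerSeries (Fin d) F) {n : ℕ} (β : Fin n → (Fin d →₀ ℕ))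
    (c : Fin n → F) :
    Bfun f (∑ l, c l • monomial (β l) (1 : F))
      = ∑ l, c l * (mfact (β l) * MvPowerSeries.coeff (β l) f) := by
  rw [← BfunL_apply, map_sum]
  refine Finset.sum_congr rfl fun l _ => ?_
  rw [map_smul, BfunL_apply, Bfun_monomial, smul_eq_mul, mul_one]

lemma triangular_zero {n : ℕ} (M : Fin n → Fin n → F) (c : Fin n → F)
    (htri : ∀ k l, l < k → M k l = 0) (hdiag : ∀ k, M k k ≠ 0)
    (hsys : ∀ k, ∑ l, c l * M k l = 0) : c = 0 := by
  classical
  by_contra hc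
  have hex : (Finset.univ.filter (fun k => c k ≠ 0)).Nonempty := by
    rcases Function.ne_iff.mp hc with ⟨k, hk⟩
    exact ⟨k, Finset.mem_filter.mpr ⟨Finset.mem_univ _, hk⟩⟩
  set k0 := Finset.max' _ hex with hk0
  have hk0mem := Finset.max'_mem _ hex
  have hck0 : c k0 ≠ 0 := (Finset.mem_filter.mp hk0mem).2
  have hsum : ∑ l, c l * M k0 l = c k0 * M k0 k0 := by
    refine Finset.sum_eq_single k0 ?_ ?_
    · intro l _ hne
      rcases lt_or_gt_of_ne hne with h | h
      · rw [htri k0 l h, mul_zero]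
      · have hcl0 : c l = 0 := by
          by_contra hcl
          have hmem : l ∈ Finset.univ.filter (fun k => c k ≠ 0) :=
            Finset.mem_filter.mpr ⟨Finset.mem_univ _, hcl⟩
          exact absurd (Finset.le_max' _ l hmem) (not_le.mpr h)
        rw [hcl0, zero_mul]
    · intro h
      exact absurd (Finset.mem_univ k0) h
  have hzero : c k0 * M k0 k0 = 0 := hsum.symm.trans (hsys k0)
  rcases mul_eq_zero.mp hzero with h | h
  · exact hck0 h
  · exact hdiag k0 h

end Helpers

/-- **Main theorem.** Let `θ_1, ..., θ_m` be pairwise distinct points and, for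
each `i`, let `P_{i1}, ..., P_{is_i}` be linearly independent polynomials; consider the `n`
interpolation conditions `g ↦ (P_{ij}(D) g)(θ_i)` (enumerated by an equivalence
`e : Fin n ≃ Σ i, Fin (s i)`). If `q_1, ..., q_n` is a "reverse" reduced basis of the power
series `e^{θ_i·X}·P_{ij}` (linearly independent, spanning the same subspace, and with
`lm(q_k) ∉ Λ{q_l}` for `k < l`), and `X^{β_k} = lm(q_k)`, then
`{lm(q_1), ..., lm(q_n)}` is the `≺`-minimal monomial interpolating basis for `Δ`. -/
theorem mainTheorem_severalPoints {F : Type*} [Field F] [CharZero F] {d m n : ℕ}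
    (prec : (Fin d →₀ ℕ) → (Fin d →₀ ℕ) → Prop) (hord : IsMonomialOrder prec)
    (θ : Fin m → (Fin d → F)) (hθ : Function.Injective θ)
    (s : Fin m → ℕ) (P : (i : Fin m) → Fin (s i) → MvPolynomial (Fin d) F)
    (hP : ∀ i, LinearIndependent F (P i))
    (e : Fin n ≃ (i : Fin m) × Fin (s i))
    (q : Fin n → MvPowerSeries (Fin d) F)
    (hq_li : LinearIndependent F q)
    (hq_span : Submodule.span F (Set.range q) =
      Submodule.span F (Set.range fun p : (i : Fin m) × Fin (s i) =>
        expThetaX (θ p.1) * ((P p.1 p.2 : MvPolynomial (Fin d) F) : MvPowerSeries (Fin d) F)))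
    (hq_rev : ∀ k l : Fin n, k < l → ∀ mon : Fin d →₀ ℕ,
      IsLeastMonPS prec (q k) mon → MvPowerSeries.coeff mon (q l) = 0)
    (β : Fin n → (Fin d →₀ ℕ)) (hβ : ∀ k, IsLeastMonPS prec (q k) (β k)) :
    IsMonIntBasisSet
        (fun k => ((MvPolynomial.aeval (θ (e k).1)).toLinearMap ∘ₗ PD (P (e k).1 (e k).2) :
          MvPolynomial (Fin d) F →ₗ[F] F))
        (Finset.image β Finset.univ) ∧
      ∀ T' : Finset (Fin d →₀ ℕ),
        IsMonIntBasisSet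
          (fun k => ((MvPolynomial.aeval (θ (e k).1)).toLinearMap ∘ₗ PD (P (e k).1 (e k).2) :
            MvPolynomial (Fin d) F →ₗ[F] F)) T' →
        ¬ SetPrec prec T' (Finset.image β Finset.univ) := by
  classical
  -- the power-series corresponding to the interpolation conditions
  have lam_eq : ∀ (k : Fin n) (g : MvPolynomial (Fin d) F),
      ((MvPolynomial.aeval (θ (e k).1)).toLinearMap ∘ₗ PD (P (e k).1 (e k).2)) g
        = Bfun (expThetaX (θ (e k).1) *
            ((P (e k).1 (e k).2 : MvPolynomial (Fin d) F) : MvPowerSeries (Fin d) F)) g :=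
    fun k g => keyA (θ (e k).1) (P (e k).1 (e k).2) g
  -- injectivity of β
  have βinj : Function.Injective β := by
    intro k l hkl
    by_contra hne
    rcases lt_or_gt_of_ne hne with h | h
    · have h0 := hq_rev k l h (β k) (hβ k)
      rw [hkl] at h0
      exact (hβ l).1 h0
    · have h0 := hq_rev l k h (β l) (hβ l)
      rw [← hkl] at h0
      exact (hβ k).1 h0
  -- `Bfun (q k) g` vanishes whenever all interpolation conditions vanish on `g`
  have vanish : ∀ g : MvPolynomial (Fin d) F,
      (∀ i, ((MvPolynomial.aeval (θ (e i).1)).toLinearMap ∘ₗ PD (P (e i).1 (e i).2)) g = 0) →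
      ∀ k, Bfun (q k) g = 0 := by
    intro g hg k
    have hker : Submodule.span F (Set.range fun p : (i : Fin m) × Fin (s i) =>
        expThetaX (θ p.1) * ((P p.1 p.2 : MvPolynomial (Fin d) F) : MvPowerSeries (Fin d) F))
        ≤ LinearMap.ker (BL g) := by
      rw [Submodule.span_le]
      rintro x ⟨p, rfl⟩
      rw [SetLike.mem_coe, LinearMap.mem_ker, BL_apply]
      show Bfun (expThetaX (θ p.1) *
        ((P p.1 p.2 : MvPolynomial (Fin d) F) : MvPowerSeries (Fin d) F)) g = 0
      have hp : p = e (e.symm p) := (e.apply_symm_apply p).symm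
      rw [hp, ← lam_eq (e.symm p) g]
      exact hg (e.symm p)
    have hmem : q k ∈ LinearMap.ker (BL g) := by
      refine hker ?_
      rw [← hq_span]
      exact Submodule.subset_span (Set.mem_range_self k)
    simpa using hmem
  -- the triangular matrix facts
  have diag : ∀ k, MvPowerSeries.coeff (β k) (q k) ≠ 0 := fun k => (hβ k).1
  have tri : ∀ k l : Fin n, l < k → MvPowerSeries.coeff (β l) (q k) = 0 :=
    fun k l h => hq_rev l k h (β l) (hβ l)
  -- the combination map
  set Gmap : (Fin n → F) →ₗ[F] MvPolynomial (Fin d) F :=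
    { toFun := fun c => ∑ l, c l • monomial (β l) (1 : F),
      map_add' := by
        intro x y
        simp [add_smul, Finset.sum_add_distrib],
      map_smul' := by
        intro r x
        simp [Finset.smul_sum, mul_smul] } with hGmap
  have inj0 : ∀ c : Fin n → F,
      (∀ i, ((MvPolynomial.aeval (θ (e i).1)).toLinearMap ∘ₗ PD (P (e i).1 (e i).2)) (Gmap c) = 0)
      → c = 0 := by
    intro c hc
    have hq0 : ∀ k, ∑ l, c l * (mfact (β l) * MvPowerSeries.coeff (β l) (q k)) = 0 := by
      intro k
      have hv := vanish (Gmap c) hc k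
      rw [show Gmap c = ∑ l, c l • monomial (β l) (1 : F) from rfl, Bfun_sum_monomial] at hv
      exact hv
    have htri0 : ∀ k l : Fin n, l < k → mfact (β l) * MvPowerSeries.coeff (β l) (q k) = 0 :=
      fun k l h => by rw [tri k l h, mul_zero]
    exact triangular_zero (fun k l => mfact (β l) * MvPowerSeries.coeff (β l) (q k)) c
      (fun k l h => htri0 k l h)
      (fun k => mul_ne_zero (mfact_ne_zero _) (diag k)) hq0
  set Amap : (Fin n → F) →ₗ[F] (Fin n → F) :=
    LinearMap.pi (fun i =>
      ((MvPolynomial.aeval (θ (e i).1)).toLinearMap ∘ₗ PD (P (e i).1 (e i).2)) ∘ₗ Gmap)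
      with hAmap
  have hAmap_apply : ∀ (c : Fin n → F) (i : Fin n),
      Amap c i = ((MvPolynomial.aeval (θ (e i).1)).toLinearMap ∘ₗ PD (P (e i).1 (e i).2))
        (Gmap c) := by
    intro c i
    rw [hAmap, LinearMap.pi_apply, LinearMap.comp_apply]
  have hAinj : Function.Injective Amap := by
    rw [← LinearMap.ker_eq_bot]
    rw [Submodule.eq_bot_iff]
    intro c hc
    rw [LinearMap.mem_ker] at hc
    refine inj0 c fun i => ?_
    rw [← hAmap_apply c i, hc]
    rfl
  have hAsurj : Function.Surjective Amap := LinearMap.injective_iff_surjective.mp hAinj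
  -- the span set
  have hset : ((fun m => (monomial m (1 : F) : MvPolynomial (Fin d) F)) ''
        ((Finset.image β Finset.univ : Finset (Fin d →₀ ℕ)) : Set (Fin d →₀ ℕ)))
      = Set.range (fun l : Fin n => (monomial (β l) (1 : F) : MvPolynomial (Fin d) F)) := by
    rw [Finset.coe_image, Finset.coe_univ, Set.image_univ, ← Set.range_comp]
    rfl
  constructor
  · constructor
    · rw [Finset.card_image_of_injective _ βinj, Finset.card_univ, Fintype.card_fin]
    · intro f
      obtain ⟨c, hc⟩ := hAsurj f
      refine ⟨Gmap c, ⟨?_, ?_⟩, ?_⟩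
      · rw [hset]
        exact (Submodule.mem_span_range_iff_exists_fun F).mpr ⟨c, rfl⟩
      · intro i
        have hgoal : Amap c i = f i := by rw [hc]
        rw [hAmap_apply] at hgoal
        exact hgoal
      · rintro g' ⟨hg'span, hg'val⟩
        rw [hset] at hg'span
        obtain ⟨c', hc'⟩ := (Submodule.mem_span_range_iff_exists_fun F).mp hg'span
        have hGc' : Gmap c' = g' := hc'
        have hAc' : Amap c' = f := by
          funext i
          rw [hAmap_apply c' i, hGc']
          exact hg'val i
        rw [← hGc', hAinj (hAc'.trans hc.symm)]
  · -- minimality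
    rintro T' hT' ⟨a, b, hA, hB, hab⟩
    have hbTT' := hB.1
    rw [Finset.mem_sdiff] at hbTT'
    obtain ⟨hbT, hbT'⟩ := hbTT'
    obtain ⟨k0, _, hk0⟩ := Finset.mem_image.mp hbT
    -- the sets S and K
    set S : Finset (Fin d →₀ ℕ) := T'.filter (fun γ => prec b γ) with hS
    set K : Finset (Fin n) := Finset.univ.filter (fun k => b = β k ∨ prec b (β k)) with hK
    have hk0K : k0 ∈ K := Finset.mem_filter.mpr ⟨Finset.mem_univ _, Or.inl hk0.symm⟩
    -- S injects into K.erase k0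
    have hSsub : S ⊆ Finset.image β (K.erase k0) := by
      intro γ hγ
      rw [hS, Finset.mem_filter] at hγ
      obtain ⟨hγT', hbγ⟩ := hγ
      have hγT : γ ∈ Finset.image β Finset.univ := by
        by_contra hγT
        have hγdiff : γ ∈ T' \ Finset.image β Finset.univ := Finset.mem_sdiff.mpr ⟨hγT', hγT⟩
        by_cases hγa : γ = a
        · subst hγa
          exact hord.irrefl b (hord.trans _ _ _ hbγ hab)
        · have hγa2 := hA.2 γ hγdiff hγa
          exact hord.irrefl b (hord.trans _ _ _ (hord.trans _ _ _ hbγ hγa2) hab)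
      obtain ⟨k, _, hk⟩ := Finset.mem_image.mp hγT
      refine Finset.mem_image.mpr ⟨k, ?_, hk⟩
      refine Finset.mem_erase.mpr ⟨?_, ?_⟩
      · rintro rfl
        rw [hk0] at hk
        exact hord.irrefl γ (hk ▸ hbγ)
      · refine Finset.mem_filter.mpr ⟨Finset.mem_univ _, Or.inr ?_⟩
        rw [hk]
        exact hbγ
    have hcard : S.card < K.card := by
      calc S.card ≤ (Finset.image β (K.erase k0)).card := Finset.card_le_card hSsub
        _ ≤ (K.erase k0).card := Finset.card_image_le
        _ < K.card := Finset.card_erase_lt_of_mem hk0K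
    -- the coefficient vectors are linearly dependent
    have hnotLI : ¬ LinearIndependent F (fun k : {k // k ∈ K} =>
        (fun γ : {γ // γ ∈ S} => MvPowerSeries.coeff (γ : Fin d →₀ ℕ) (q k))) := by
      intro hLI
      have hle := hLI.fintype_card_le_finrank
      rw [Module.finrank_pi, Fintype.card_coe, Fintype.card_coe] at hle
      omega
    obtain ⟨dc, hdc0, k1, hk1⟩ := Fintype.not_linearIndependent_iff.mp hnotLI
    set h : MvPowerSeries (Fin d) F := ∑ k : {k // k ∈ K}, dc k • q k with hh
    have hne : h ≠ 0 := by
      intro h0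
      have hLIsub : LinearIndependent F (q ∘ (Subtype.val : {k // k ∈ K} → Fin n)) :=
        hq_li.comp _ Subtype.val_injective
      exact hk1 (Fintype.linearIndependent_iff.mp hLIsub dc h0 k1)
    have hmem : h ∈ Submodule.span F (Set.range fun p : (i : Fin m) × Fin (s i) =>
        expThetaX (θ p.1) * ((P p.1 p.2 : MvPolynomial (Fin d) F) : MvPowerSeries (Fin d) F)) := by
      rw [← hq_span, hh]
      exact Submodule.sum_mem _ fun k _ =>
        Submodule.smul_mem _ _ (Submodule.subset_span (Set.mem_range_self _))
    obtain ⟨u, hu⟩ := (Submodule.mem_span_range_iff_exists_fun F).mp hmem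
    have hune : ∃ p0, u p0 ≠ 0 := by
      by_contra hcon
      push_neg at hcon
      apply hne
      rw [← hu]
      exact Finset.sum_eq_zero fun p _ => by rw [hcon p, zero_smul]
    obtain ⟨p0, hup0⟩ := hune
    -- coefficients of h vanish on T'
    have hcoeffh : ∀ γ ∈ T', MvPowerSeries.coeff γ h = 0 := by
      intro γ hγ
      have hγb : γ ≠ b := fun hγb => hbT' (hγb ▸ hγ)
      rw [hh, map_sum]
      by_cases hbγ : prec b γ
      · have hγS : γ ∈ S := Finset.mem_filter.mpr ⟨hγ, hbγ⟩
        have := congrFun hdc0 ⟨γ, hγS⟩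
        rw [Finset.sum_apply] at this
        simpa [map_smul] using this
      · refine Finset.sum_eq_zero fun k _ => ?_
        have hcoeff0 : MvPowerSeries.coeff γ (q (k : Fin n)) = 0 := by
          by_contra hcon
          have hkK := Finset.mem_filter.mp k.2
          by_cases hγβ : γ = β (k : Fin n)
          · rcases hkK.2 with hbb | hbb
            · exact hγb (hγβ.trans hbb.symm)
            · exact hbγ (hγβ ▸ hbb)
          · have hlt := (hβ (k : Fin n)).2 γ hcon hγβ
            rcases hkK.2 with hbb | hbb
            · exact hbγ (by rw [hbb]; exact hlt)
            · exact hbγ (hord.trans _ _ _ hbb hlt)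
        rw [map_smul, hcoeff0, smul_zero]
    -- Bfun h vanishes on the span of the monomials of T'
    have hvan : ∀ g ∈ Submodule.span F ((fun m => (monomial m (1 : F) :
        MvPolynomial (Fin d) F)) '' (T' : Set (Fin d →₀ ℕ))), Bfun h g = 0 := by
      intro g hg
      have hker : Submodule.span F ((fun m => (monomial m (1 : F) : MvPolynomial (Fin d) F)) ''
          (T' : Set (Fin d →₀ ℕ))) ≤ LinearMap.ker (BfunL h) := by
        rw [Submodule.span_le]
        rintro x ⟨γ, hγ, rfl⟩
        rw [SetLike.mem_coe, LinearMap.mem_ker, BfunL_apply, Bfun_monomial,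
          hcoeffh γ hγ, mul_zero, zero_mul]
      simpa using hker hg
    -- construct the contradiction
    obtain ⟨g0, ⟨hg0span, hg0val⟩, -⟩ :=
      hT'.2 (fun i => if i = e.symm p0 then 1 else 0)
    have hBg0 : Bfun h g0 = u p0 := by
      have hlamval : ∀ p : (i : Fin m) × Fin (s i),
          Bfun (expThetaX (θ p.1) *
            ((P p.1 p.2 : MvPolynomial (Fin d) F) : MvPowerSeries (Fin d) F)) g0
            = if e.symm p = e.symm p0 then 1 else 0 := by
        intro p
        have hp : p = e (e.symm p) := (e.apply_symm_apply p).symm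
        conv_lhs => rw [hp]
        rw [← lam_eq (e.symm p) g0]
        exact hg0val (e.symm p)
      rw [← hu, Bfun_sum_left]
      have hterm : ∀ p ∈ Finset.univ, Bfun (u p • (expThetaX (θ p.1) *
          ((P p.1 p.2 : MvPolynomial (Fin d) F) : MvPowerSeries (Fin d) F))) g0
          = if p = p0 then u p0 else 0 := by
        intro p _
        rw [Bfun_smul_left, hlamval p]
        by_cases hp : p = p0
        · subst hp
          rw [if_pos rfl, if_pos rfl, mul_one]
        · rw [if_neg hp, if_neg (fun hc => hp (e.symm.injective hc)), mul_zero]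
      rw [Finset.sum_congr rfl hterm]
      simp
    exact hup0 (hBg0 ▸ hvan g0 hg0span)
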